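/- arXiv:1701.05956 — 2 statements merged into one kernel-verified Lean document; each statement's English description precedes it below -/
import Mathlib

section
/- Let F be a field, let A and B be commutative F-algebras, and let m ⊂ A and n ⊂ B be ideals such that the quotient maps induce F-algebra isomorphisms A/m ≅ F and B/n ≅ F. Let p be the ideal of A ⊗_F B generated by {a ⊗ 1 : a ∈ m} ∪ {1 ⊗ b : b ∈ n}. Assume that for all i, the F-vector spaces m^i/m^{i+1} and n^i/n^{i+1} are finite dimensional. Then for every natural number k, dim_F(p^k/p^{k+1}) = Σ_{i+j=k} dim_F(m^i/m^{i+1}) · dim_F(n^j/n^{j+1}). Equivalently, the Hilbert series multiply: Σ_k dim_F(p^k/p^{k+1}) t^k = (Σ_i dim_F(m^i/m^{i+1}) t^i) · (Σ_j dim_F(n^j/n^{j+1}) t^j) as formal power series. -/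
open TensorProduct

/-- The `i`-th graded piece `mⁱ/mⁱ⁺¹` of the associated graded ring of `A` along the
ideal `m`, as an `F`-vector space. -/
abbrev gradedPiece (F : Type*) [Field F] {A : Type*} [CommRing A] [Algebra F A]
    (m : Ideal A) (i : ℕ) :=
  ↥(Submodule.restrictScalars F (m ^ i)) ⧸
    (Submodule.restrictScalars F (m ^ (i + 1))).comap
      (Submodule.restrictScalars F (m ^ i)).subtype

section Aux

variable {F : Type*} [Field F] {A B : Type*} [CommRing A] [CommRing B]
  [Algebra F A] [Algebra F B]

/-- A positive natural number, cast into the semiring of ideals, is the unit ideal. -/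
lemma natCast_ideal_eq_one {R : Type*} [CommRing R] (c : ℕ) (hc : c ≠ 0) :
    (c : Ideal R) = 1 := by
  obtain ⟨c, rfl⟩ := Nat.exists_eq_succ_of_ne_zero hc
  rw [Nat.cast_succ, Submodule.add_eq_sup, Ideal.one_eq_top, sup_top_eq]

/-- Binomial formula for powers of a sup of ideals. -/
lemma ideal_sup_pow {R : Type*} [CommRing R] (M N : Ideal R) (k : ℕ) :
    (M ⊔ N) ^ k = ∑ i ∈ Finset.range (k + 1), M ^ i * N ^ (k - i) := by
  rw [← Submodule.add_eq_sup, add_pow]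
  refine Finset.sum_congr rfl fun i hi => ?_
  rw [natCast_ideal_eq_one (k.choose i) (Nat.choose_pos (Nat.lt_succ_iff.mp
    (Finset.mem_range.mp hi))).ne', mul_one]

lemma restrictScalars_sup {S : Type*} [CommRing S] [Algebra F S] (I J : Ideal S) :
    Submodule.restrictScalars F (I ⊔ J) =
      Submodule.restrictScalars F I ⊔ Submodule.restrictScalars F J := by
  ext x
  simp only [Submodule.restrictScalars_mem, Submodule.mem_sup]

lemma restrictScalars_sum {S : Type*} [CommRing S] [Algebra F S] {ι : Type*} (s : Finset ι)
    (f : ι → Ideal S) :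
    Submodule.restrictScalars F (∑ i ∈ s, f i) =
      ⨆ i ∈ s, Submodule.restrictScalars F (f i) := by
  classical
  induction s using Finset.induction_on with
  | empty => simp
  | @insert _ _ ha ih =>
      rw [Finset.sum_insert ha, Submodule.add_eq_sup, restrictScalars_sup, ih]
      rw [Finset.iSup_insert]

/-- The `F`-span of pure tensors from a pair of ideals is already an ideal. -/
lemma restrictScalars_span_image2 (I : Ideal A) (J : Ideal B) :
    Submodule.restrictScalars F (Ideal.span
        (Set.image2 (fun a b => a ⊗ₜ[F] b) (I : Set A) (J : Set B))) =
      Submodule.span F (Set.image2 (fun a b => a ⊗ₜ[F] b) (I : Set A) (J : Set B)) := by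
  apply le_antisymm
  · intro x hx
    have hx' : x ∈ Ideal.span (Set.image2 (fun a b => a ⊗ₜ[F] b) (I : Set A) (J : Set B)) := hx
    refine Submodule.span_induction (fun t ht => Submodule.subset_span ht)
      (Submodule.zero_mem _) (fun y z _ _ hy hz => Submodule.add_mem _ hy hz) ?_ hx'
    -- smul case: multiplication by an arbitrary element of `A ⊗ B`
    rintro s y _ hy
    -- first handle the case where `y` is a generator, by induction on `s`
    have key : ∀ a ∈ I, ∀ b ∈ J, ∀ s : A ⊗[F] B,
        s * (a ⊗ₜ[F] b) ∈ Submodule.span F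
          (Set.image2 (fun a b => a ⊗ₜ[F] b) (I : Set A) (J : Set B)) := by
      intro a ha b hb s
      induction s using TensorProduct.induction_on with
      | zero => simp
      | tmul a' b' =>
          rw [Algebra.TensorProduct.tmul_mul_tmul]
          exact Submodule.subset_span (Set.mem_image2_of_mem (I.mul_mem_left a' ha)
            (J.mul_mem_left b' hb))
      | add s t hs ht => rw [add_mul]; exact Submodule.add_mem _ hs ht
    -- now do span induction on `y`
    refine Submodule.span_induction ?_ ?_ ?_ ?_ hy
    · rintro t ⟨a, ha, b, hb, rfl⟩
      exact key a ha b hb s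
    · simp [smul_eq_mul]
    · intro y z _ _ hy hz
      rw [smul_add]; exact Submodule.add_mem _ hy hz
    · intro c y _ hy
      rw [smul_comm]
      exact Submodule.smul_mem _ c hy
  · rw [Submodule.span_le]
    intro t ht
    exact Ideal.subset_span ht

lemma map_mul_map_eq_span_image2 (I : Ideal A) (J : Ideal B) :
    Ideal.map (Algebra.TensorProduct.includeLeftRingHom : A →+* A ⊗[F] B) I *
      Ideal.map (Algebra.TensorProduct.includeRight : B →ₐ[F] A ⊗[F] B) J =
    Ideal.span (Set.image2 (fun a b => a ⊗ₜ[F] b) (I : Set A) (J : Set B)) := by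
  rw [Ideal.map, Ideal.map, Ideal.span_mul_span']
  congr 1
  apply Set.Subset.antisymm
  · rintro t ht
    rw [Set.mem_mul] at ht
    obtain ⟨x, hx, y, hy, rfl⟩ := ht
    obtain ⟨a, ha, rfl⟩ := hx
    obtain ⟨b, hb, rfl⟩ := hy
    have : (Algebra.TensorProduct.includeLeftRingHom (R := F) (A := A) (B := B)) a *
        (Algebra.TensorProduct.includeRight (R := F) (A := A) (B := B)) b = a ⊗ₜ[F] b := by
      simp [Algebra.TensorProduct.includeLeftRingHom_apply,
        Algebra.TensorProduct.includeRight_apply, Algebra.TensorProduct.tmul_mul_tmul]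
    rw [this]
    exact Set.mem_image2_of_mem ha hb
  · rintro t ⟨a, ha, b, hb, rfl⟩
    rw [Set.mem_mul]
    refine ⟨_, Set.mem_image_of_mem _ ha, _, Set.mem_image_of_mem _ hb, ?_⟩
    simp [Algebra.TensorProduct.includeLeftRingHom_apply,
      Algebra.TensorProduct.includeRight_apply, Algebra.TensorProduct.tmul_mul_tmul]

/-- The key ideal-theoretic computation: powers of `p` decompose. -/
lemma restrictScalars_pow_p (m : Ideal A) (n : Ideal B) (p : Ideal (A ⊗[F] B))
    (hp : p = Ideal.span
      ((fun a => a ⊗ₜ[F] (1 : B)) '' (m : Set A) ∪ (fun b => (1 : A) ⊗ₜ[F] b) '' (n : Set B)))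
    (k : ℕ) :
    Submodule.restrictScalars F (p ^ k) =
      ⨆ i ∈ Finset.range (k + 1), Submodule.span F
        (Set.image2 (fun a b => a ⊗ₜ[F] b) ((m ^ i : Ideal A) : Set A)
          ((n ^ (k - i) : Ideal B) : Set B)) := by
  have hMN : p = Ideal.map (Algebra.TensorProduct.includeLeftRingHom : A →+* A ⊗[F] B) m ⊔
      Ideal.map (Algebra.TensorProduct.includeRight : B →ₐ[F] A ⊗[F] B) n := by
    rw [hp, Ideal.span_union, Ideal.map, Ideal.map]
    rfl
  rw [hMN, ideal_sup_pow, restrictScalars_sum]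
  refine iSup_congr fun i => iSup_congr fun _ => ?_
  rw [← Ideal.map_pow, ← Ideal.map_pow, map_mul_map_eq_span_image2,
    restrictScalars_span_image2]


/-- Existence of an `F`-linear complement of `mⁱ⁺¹` inside `mⁱ`, isomorphic to the
`i`-th graded piece. -/
lemma exists_graded_complement (m : Ideal A) (i : ℕ) :
    ∃ U : Submodule F A, U ≤ Submodule.restrictScalars F (m ^ i) ∧
      U ⊓ Submodule.restrictScalars F (m ^ (i + 1)) = ⊥ ∧
      U ⊔ Submodule.restrictScalars F (m ^ (i + 1)) = Submodule.restrictScalars F (m ^ i) ∧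
      Nonempty (gradedPiece F m i ≃ₗ[F] U) := by
  set P : Submodule F A := Submodule.restrictScalars F (m ^ i)
  set P' : Submodule F A := Submodule.restrictScalars F (m ^ (i + 1))
  set K : Submodule F P := P'.comap P.subtype
  obtain ⟨K', hK⟩ := K.exists_isCompl
  have hP'le : P' ≤ P := fun x hx => Ideal.pow_le_pow_right (Nat.le_succ i) hx
  refine ⟨K'.map P.subtype, Submodule.map_subtype_le _ _, ?_, ?_, ?_⟩
  · rw [eq_bot_iff]
    rintro x ⟨⟨⟨y, hyP⟩, hyK', rfl⟩, hxP'⟩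
    have : (⟨y, hyP⟩ : P) ∈ K ⊓ K' := ⟨hxP', hyK'⟩
    rw [hK.inf_eq_bot] at this
    simp only [Submodule.mem_bot] at this
    rw [this]; rfl
  · have h1 : K.map P.subtype = P' := by
      rw [Submodule.map_comap_subtype, inf_eq_right.mpr hP'le]
    show K'.map P.subtype ⊔ P' = P
    rw [← h1, ← Submodule.map_sup, sup_comm, hK.sup_eq_top, Submodule.map_subtype_top]
  · exact ⟨(Submodule.quotientEquivOfIsCompl K K' hK).trans (Submodule.equivSubtypeMap P K')⟩

/-- Existence of compatible `F`-linear projections onto the chosen complements. -/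
lemma exists_graded_projections (m : Ideal A) (U : ℕ → Submodule F A)
    (hle : ∀ i, U i ≤ Submodule.restrictScalars F (m ^ i))
    (hinf : ∀ i, U i ⊓ Submodule.restrictScalars F (m ^ (i + 1)) = ⊥)
    (hsup : ∀ i, U i ⊔ Submodule.restrictScalars F (m ^ (i + 1)) =
      Submodule.restrictScalars F (m ^ i)) (i : ℕ) :
    ∃ pr : A →ₗ[F] A, (∀ x ∈ U i, pr x = x) ∧ (∀ j, j ≠ i → ∀ x ∈ U j, pr x = 0) ∧
      (∀ a, i < a → ∀ x ∈ Submodule.restrictScalars F (m ^ a), pr x = 0) := by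
  set P : ℕ → Submodule F A := fun j => Submodule.restrictScalars F (m ^ j) with hP
  have hPmono : ∀ {a b : ℕ}, a ≤ b → P b ≤ P a := fun hab x hx =>
    Ideal.pow_le_pow_right hab hx
  -- earlier pieces are disjoint from the filtration
  have claim1 : ∀ j, (⨆ l ∈ Finset.range j, U l) ⊓ P j = ⊥ := by
    intro j
    induction j with
    | zero => simp
    | succ j ih =>
        rw [eq_bot_iff]
        rintro x ⟨hx1, hx2⟩
        rw [Finset.range_add_one, Finset.iSup_insert] at hx1
        obtain ⟨u, hu, s, hs, rfl⟩ := Submodule.mem_sup.mp hx1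
        have hsP : s ∈ (⨆ l ∈ Finset.range j, U l) ⊓ P j := by
          refine ⟨hs, ?_⟩
          have hxj : u + s ∈ P j := hPmono (Nat.le_succ j) hx2
          have huj : u ∈ P j := hle j hu
          simpa using Submodule.sub_mem _ hxj huj
        rw [ih] at hsP
        obtain rfl : s = 0 := by simpa using hsP
        have : u + 0 ∈ U j ⊓ P (j + 1) := ⟨by simpa using hu, hx2⟩
        rw [hinf j] at this
        simpa using this
  -- telescoping: earlier pieces together with the filtration span everything
  have claim2 : ∀ j, (⨆ l ∈ Finset.range j, U l) ⊔ P j = ⊤ := by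
    intro j
    induction j with
    | zero =>
        have : P 0 = ⊤ := by
          rw [hP]
          simp only [pow_zero, Ideal.one_eq_top]
          rfl
        simp [this]
    | succ j ih =>
        rw [Finset.range_add_one, Finset.iSup_insert, sup_right_comm, hsup j, sup_comm, ih]
  -- the complement of `U i`
  set C : Submodule F A := (⨆ l ∈ Finset.range i, U l) ⊔ P (i + 1) with hC
  have hcompl : IsCompl (U i) C := by
    constructor
    · rw [disjoint_iff, eq_bot_iff]
      rintro x ⟨hx1, hx2⟩
      obtain ⟨s, hs, t, ht, rfl⟩ := Submodule.mem_sup.mp hx2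
      have hsP : s ∈ (⨆ l ∈ Finset.range i, U l) ⊓ P i := by
        refine ⟨hs, ?_⟩
        have h1 : s + t ∈ P i := hle i hx1
        have h2 : t ∈ P i := hPmono (Nat.le_succ i) ht
        simpa using Submodule.sub_mem _ h1 h2
      rw [claim1 i] at hsP
      obtain rfl : s = 0 := by simpa using hsP
      have : 0 + t ∈ U i ⊓ P (i + 1) := ⟨hx1, by simpa using ht⟩
      rw [hinf i] at this
      simpa using this
    · rw [codisjoint_iff, hC, ← sup_assoc, sup_comm (U i), sup_assoc, hsup i,
        claim2 i]
  refine ⟨(U i).subtype ∘ₗ Submodule.projectionOnto (U i) C hcompl, ?_, ?_, ?_⟩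
  · intro x hx
    simp [Submodule.projectionOnto_apply_left hcompl ⟨x, hx⟩]
  · intro j hj x hx
    have hxC : x ∈ C := by
      rcases lt_or_gt_of_ne hj with h | h
      · exact le_sup_left (α := Submodule F A) (by
          exact le_biSup U (Finset.mem_range.mpr h) hx)
      · exact le_sup_right (α := Submodule F A) (hPmono h (hle j hx))
    simp [Submodule.projectionOnto_apply_right hcompl ⟨x, hxC⟩]
  · intro a ha x hx
    have hxC : x ∈ C := le_sup_right (α := Submodule F A) (hPmono ha hx)
    simp [Submodule.projectionOnto_apply_right hcompl ⟨x, hxC⟩]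

/-- The span of pure tensors from two subspaces is isomorphic to their tensor product. -/
lemma span_image2_equiv_tensor (U : Submodule F A) (W : Submodule F B) :
    Nonempty ((U ⊗[F] W) ≃ₗ[F] Submodule.span F
      (Set.image2 (fun a b => a ⊗ₜ[F] b) (U : Set A) (W : Set B))) := by
  set ψ : U ⊗[F] W →ₗ[F] A ⊗[F] B := TensorProduct.map U.subtype W.subtype with hψ
  obtain ⟨U', hU'⟩ := U.exists_isCompl
  obtain ⟨W', hW'⟩ := W.exists_isCompl
  set φ : A ⊗[F] B →ₗ[F] U ⊗[F] W :=
    TensorProduct.map (Submodule.projectionOnto U U' hU')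
      (Submodule.projectionOnto W W' hW') with hφ
  have hretr : φ.comp ψ = LinearMap.id := by
    rw [hψ, hφ, ← TensorProduct.map_comp]
    have h1 : (Submodule.projectionOnto U U' hU').comp U.subtype = LinearMap.id := by
      ext x; simp [Submodule.projectionOnto_apply_left]
    have h2 : (Submodule.projectionOnto W W' hW').comp W.subtype = LinearMap.id := by
      ext x; simp [Submodule.projectionOnto_apply_left]
    rw [h1, h2, TensorProduct.map_id]
  have hinj : Function.Injective ψ := by
    intro x y hxy
    have h1 : φ (ψ x) = φ (ψ y) := congrArg φ hxy
    rw [← LinearMap.comp_apply, ← LinearMap.comp_apply, hretr] at h1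
    simpa using h1
  have hrange : LinearMap.range ψ = Submodule.span F
      (Set.image2 (fun a b => a ⊗ₜ[F] b) (U : Set A) (W : Set B)) := by
    rw [hψ, TensorProduct.range_map_eq_span_tmul]
    congr 1
    ext t
    constructor
    · rintro ⟨⟨a, ha⟩, ⟨b, hb⟩, rfl⟩
      exact Set.mem_image2_of_mem ha hb
    · rintro ⟨a, ha, b, hb, rfl⟩
      exact ⟨⟨a, ha⟩, ⟨b, hb⟩, rfl⟩
  exact ⟨(LinearEquiv.ofInjective ψ hinj).trans (LinearEquiv.ofEq _ _ hrange)⟩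

/-- Dimension of a finite sup of subspaces admitting compatible projections. -/
lemma finrank_biSup_of_projections {M : Type*} [AddCommGroup M] [Module F M]
    (X : ℕ → Submodule F M) (hfin : ∀ i, FiniteDimensional F (X i))
    (π : ℕ → M →ₗ[F] M) (hid : ∀ i, ∀ x ∈ X i, π i x = x)
    (hz : ∀ i j, i ≠ j → ∀ x ∈ X j, π i x = 0) (s : Finset ℕ) :
    FiniteDimensional F ↥(⨆ i ∈ s, X i) ∧
      Module.finrank F ↥(⨆ i ∈ s, X i) = ∑ i ∈ s, Module.finrank F (X i) := by
  classical
  induction s using Finset.induction_on with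
  | empty =>
      have hbot : (⨆ i ∈ (∅ : Finset ℕ), X i) = ⊥ := by simp
      rw [hbot]
      exact ⟨inferInstance, by simp⟩
  | @insert a s ha ih =>
      have hdisj : Disjoint (X a) (⨆ i ∈ s, X i) := by
        rw [disjoint_iff, eq_bot_iff]
        rintro x ⟨hx1, hx2⟩
        have h1 : π a x = x := hid a x hx1
        have h2 : π a x = 0 := by
          have hker : (⨆ i ∈ s, X i) ≤ LinearMap.ker (π a) := by
            refine iSup_le fun i => iSup_le fun hi => fun y hy => ?_
            exact LinearMap.mem_ker.mpr (hz a i (by rintro rfl; exact ha hi) y hy)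
          exact LinearMap.mem_ker.mp (hker hx2)
        rw [Submodule.mem_bot, ← h1, h2]
      obtain ⟨ihfin, ihrank⟩ := ih
      haveI := ihfin
      haveI := hfin a
      have e : (⨆ i ∈ insert a s, X i) = X a ⊔ ⨆ i ∈ s, X i := by
        rw [Finset.iSup_insert]
      rw [e]
      refine ⟨inferInstance, ?_⟩
      have h := Submodule.finrank_sup_add_finrank_inf_eq (X a) (⨆ i ∈ s, X i)
      rw [hdisj.eq_bot] at h
      simp only [finrank_bot] at h
      rw [Finset.sum_insert ha, ← ihrank]
      omega

end Aux

set_option maxHeartbeats 1600000 in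
/-- **Proposition 2.2 (Hilbert series of a product).** -/
theorem finrank_gradedPiece_tensor {F : Type*} [Field F] {A B : Type*} [CommRing A] [CommRing B]
    [Algebra F A] [Algebra F B] (m : Ideal A) (n : Ideal B)
    (hA : Function.Bijective (algebraMap F (A ⧸ m)))
    (hB : Function.Bijective (algebraMap F (B ⧸ n)))
    (p : Ideal (A ⊗[F] B))
    (hp : p = Ideal.span
      ((fun a => a ⊗ₜ[F] (1 : B)) '' (m : Set A) ∪ (fun b => (1 : A) ⊗ₜ[F] b) '' (n : Set B)))
    (hm : ∀ i, FiniteDimensional F (gradedPiece F m i))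
    (hn : ∀ i, FiniteDimensional F (gradedPiece F n i))
    (k : ℕ) :
    FiniteDimensional F (gradedPiece F p k) ∧
    Module.finrank F (gradedPiece F p k) =
      ∑ i ∈ Finset.range (k + 1),
        Module.finrank F (gradedPiece F m i) * Module.finrank F (gradedPiece F n (k - i)) := by
  classical
  choose UA hUA1 hUA2 hUA3 hUA4 using exists_graded_complement (F := F) m
  choose WB hWB1 hWB2 hWB3 hWB4 using exists_graded_complement (F := F) n
  choose prA hprA1 hprA2 hprA3 using exists_graded_projections m UA hUA1 hUA2 hUA3
  choose prB hprB1 hprB2 hprB3 using exists_graded_projections n WB hWB1 hWB2 hWB3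
  set X : ℕ → Submodule F (A ⊗[F] B) := fun i =>
    Submodule.span F (Set.image2 (fun a b => a ⊗ₜ[F] b) (UA i : Set A)
      (WB (k - i) : Set B)) with hX
  set π : ℕ → (A ⊗[F] B) →ₗ[F] (A ⊗[F] B) :=
    fun i => TensorProduct.map (prA i) (prB (k - i)) with hπ
  -- finite dimensionality and dimension of the pieces
  have hXfin : ∀ i, FiniteDimensional F (X i) := by
    intro i
    obtain ⟨eU⟩ := hUA4 i
    obtain ⟨eW⟩ := hWB4 (k - i)
    obtain ⟨e⟩ := span_image2_equiv_tensor (UA i) (WB (k - i))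
    haveI := hm i
    haveI := hn (k - i)
    haveI : FiniteDimensional F (UA i) := eU.finiteDimensional
    haveI : FiniteDimensional F (WB (k - i)) := eW.finiteDimensional
    exact Module.Finite.equiv e
  have hXrank : ∀ i, Module.finrank F (X i) =
      Module.finrank F (gradedPiece F m i) * Module.finrank F (gradedPiece F n (k - i)) := by
    intro i
    obtain ⟨eU⟩ := hUA4 i
    obtain ⟨eW⟩ := hWB4 (k - i)
    obtain ⟨e⟩ := span_image2_equiv_tensor (UA i) (WB (k - i))
    rw [← LinearEquiv.finrank_eq e, Module.finrank_tensorProduct,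
      ← LinearEquiv.finrank_eq eU, ← LinearEquiv.finrank_eq eW]
  -- projections act as identity/zero on the pieces
  have hid : ∀ i, ∀ x ∈ X i, π i x = x := by
    intro i x hx
    refine Submodule.span_induction ?_ ?_ ?_ ?_ hx
    · rintro t ⟨u, hu, w, hw, rfl⟩
      rw [hπ]
      simp only [TensorProduct.map_tmul]
      rw [hprA1 i u hu, hprB1 (k - i) w hw]
    · simp
    · intro y z _ _ hy hz
      rw [map_add, hy, hz]
    · intro c y _ hy
      rw [map_smul, hy]
  have hzero : ∀ i j, i ≠ j → ∀ x ∈ X j, π i x = 0 := by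
    intro i j hij x hx
    refine Submodule.span_induction ?_ ?_ ?_ ?_ hx
    · rintro t ⟨u, hu, w, hw, rfl⟩
      rw [hπ]
      simp only [TensorProduct.map_tmul]
      rw [hprA2 i j (Ne.symm hij) u hu, TensorProduct.zero_tmul]
    · simp
    · intro y z _ _ hy hz
      rw [map_add, hy, hz, add_zero]
    · intro c y _ hy
      rw [map_smul, hy, smul_zero]
  -- `X i` sits inside `pᵏ`
  have hXle : ∀ i ∈ Finset.range (k + 1), X i ≤ Submodule.restrictScalars F (p ^ k) := by
    intro i hi
    rw [restrictScalars_pow_p m n p hp k]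
    refine le_trans ?_ (le_biSup _ hi)
    exact Submodule.span_mono (Set.image2_subset (fun x hx => hUA1 i hx)
      (fun y hy => hWB1 (k - i) hy))
  have hSkle : (⨆ i ∈ Finset.range (k + 1), X i) ≤ Submodule.restrictScalars F (p ^ k) :=
    iSup_le fun i => iSup_le fun hi => hXle i hi
  -- the decomposition `pᵏ = Sk ⊔ pᵏ⁺¹`
  have hdecomp : Submodule.restrictScalars F (p ^ k) =
      (⨆ i ∈ Finset.range (k + 1), X i) ⊔ Submodule.restrictScalars F (p ^ (k + 1)) := by
    apply le_antisymm
    · rw [restrictScalars_pow_p m n p hp k]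
      refine iSup_le fun i => iSup_le fun hi => ?_
      rw [Submodule.span_le]
      rintro t ⟨a, ha, b, hb, rfl⟩
      have hik : i ≤ k := Nat.lt_succ_iff.mp (Finset.mem_range.mp hi)
      have ha' : a ∈ UA i ⊔ Submodule.restrictScalars F (m ^ (i + 1)) := by
        rw [hUA3 i]; exact ha
      have hb' : b ∈ WB (k - i) ⊔ Submodule.restrictScalars F (n ^ (k - i + 1)) := by
        rw [hWB3 (k - i)]; exact hb
      obtain ⟨u, hu, a', ha'', rfl⟩ := Submodule.mem_sup.mp ha'
      obtain ⟨w, hw, b', hb'', rfl⟩ := Submodule.mem_sup.mp hb'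
      have expand : (u + a') ⊗ₜ[F] (w + b') =
          u ⊗ₜ[F] w + u ⊗ₜ[F] b' + a' ⊗ₜ[F] (w + b') := by
        rw [TensorProduct.add_tmul, TensorProduct.tmul_add]
      show (u + a') ⊗ₜ[F] (w + b') ∈ (⨆ i ∈ Finset.range (k + 1), X i) ⊔
        Submodule.restrictScalars F (p ^ (k + 1))
      rw [expand]
      refine Submodule.add_mem _ (Submodule.add_mem _ ?_ ?_) ?_
      · -- u ⊗ w ∈ Sk
        exact Submodule.mem_sup_left (Submodule.mem_iSup_of_mem i
          (Submodule.mem_iSup_of_mem hi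
            (Submodule.subset_span (Set.mem_image2_of_mem hu hw))))
      · -- u ⊗ b' ∈ pᵏ⁺¹
        refine Submodule.mem_sup_right ?_
        rw [restrictScalars_pow_p m n p hp (k + 1)]
        have hik2 : i ∈ Finset.range (k + 2) := Finset.mem_range.mpr (by omega)
        refine Submodule.mem_iSup_of_mem i (Submodule.mem_iSup_of_mem hik2 ?_)
        have heq : k + 1 - i = k - i + 1 := by omega
        rw [heq]
        exact Submodule.subset_span (Set.mem_image2_of_mem (hUA1 i hu) hb'')
      · -- a' ⊗ (w + b') ∈ pᵏ⁺¹
        refine Submodule.mem_sup_right ?_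
        rw [restrictScalars_pow_p m n p hp (k + 1)]
        have hik2 : i + 1 ∈ Finset.range (k + 2) := Finset.mem_range.mpr (by omega)
        refine Submodule.mem_iSup_of_mem (i + 1) (Submodule.mem_iSup_of_mem hik2 ?_)
        have heq : k + 1 - (i + 1) = k - i := by omega
        rw [heq]
        have hwb : w + b' ∈ Submodule.restrictScalars F (n ^ (k - i)) := by
          rw [← hWB3 (k - i)]
          exact Submodule.mem_sup.mpr ⟨w, hw, b', hb'', rfl⟩
        exact Submodule.subset_span (Set.mem_image2_of_mem ha'' hwb)
    · refine sup_le hSkle fun x hx => ?_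
      exact Ideal.pow_le_pow_right (Nat.le_succ k) hx
  -- disjointness of Sk and pᵏ⁺¹
  have hdisj : (⨆ i ∈ Finset.range (k + 1), X i) ⊓
      Submodule.restrictScalars F (p ^ (k + 1)) = ⊥ := by
    set E : (A ⊗[F] B) →ₗ[F] A ⊗[F] B := ∑ i ∈ Finset.range (k + 1), π i with hE
    have hEid : ∀ x ∈ (⨆ i ∈ Finset.range (k + 1), X i), E x = x := by
      intro x hx
      have hle : (⨆ i ∈ Finset.range (k + 1), X i) ≤ LinearMap.eqLocus E LinearMap.id := by
        refine iSup_le fun i => iSup_le fun hi => ?_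
        intro y hy
        rw [LinearMap.mem_eqLocus, hE, LinearMap.sum_apply, LinearMap.id_apply]
        rw [Finset.sum_eq_single_of_mem i hi (fun j _ hji => hzero j i hji y hy)]
        exact hid i y hy
      exact hle hx
    have hEzero : ∀ x ∈ Submodule.restrictScalars F (p ^ (k + 1)), E x = 0 := by
      intro x hx
      have hle : Submodule.restrictScalars F (p ^ (k + 1)) ≤ LinearMap.ker E := by
        rw [restrictScalars_pow_p m n p hp (k + 1)]
        refine iSup_le fun a => iSup_le fun ha => ?_
        rw [Submodule.span_le]
        rintro t ⟨x', hx', y', hy', rfl⟩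
        have ha' : a ≤ k + 1 := Nat.lt_succ_iff.mp (Finset.mem_range.mp ha)
        show x' ⊗ₜ[F] y' ∈ LinearMap.ker E
        rw [LinearMap.mem_ker, hE, LinearMap.sum_apply]
        refine Finset.sum_eq_zero fun i hi => ?_
        have hik : i ≤ k := Nat.lt_succ_iff.mp (Finset.mem_range.mp hi)
        rw [hπ]
        simp only [TensorProduct.map_tmul]
        by_cases hcase : i < a
        · rw [hprA3 i a hcase x' hx', TensorProduct.zero_tmul]
        · push_neg at hcase
          have hlt : k - i < k + 1 - a := by omega
          rw [hprB3 (k - i) (k + 1 - a) hlt y' hy', TensorProduct.tmul_zero]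
      exact LinearMap.mem_ker.mp (hle hx)
    rw [eq_bot_iff]
    rintro x ⟨hx1, hx2⟩
    rw [Submodule.mem_bot, ← hEid x hx1, hEzero x hx2]
  -- assemble the linear equivalence with `Sk`
  have hcompl : IsCompl
      ((Submodule.restrictScalars F (p ^ (k + 1))).comap
        (Submodule.restrictScalars F (p ^ k)).subtype)
      ((⨆ i ∈ Finset.range (k + 1), X i).comap
        (Submodule.restrictScalars F (p ^ k)).subtype) := by
    constructor
    · rw [disjoint_iff, eq_bot_iff]
      rintro x ⟨hx1, hx2⟩
      have hmem : (x : A ⊗[F] B) ∈ (⨆ i ∈ Finset.range (k + 1), X i) ⊓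
          Submodule.restrictScalars F (p ^ (k + 1)) := ⟨hx2, hx1⟩
      rw [hdisj] at hmem
      have hx0 : (x : A ⊗[F] B) = 0 := by simpa using hmem
      exact (Submodule.mem_bot F).mpr (Subtype.ext hx0)
    · rw [codisjoint_iff, eq_top_iff]
      rintro ⟨x, hx⟩ -
      have hx' : x ∈ (⨆ i ∈ Finset.range (k + 1), X i) ⊔
          Submodule.restrictScalars F (p ^ (k + 1)) := by
        rw [← hdecomp]; exact hx
      obtain ⟨s, hs, t, ht, hst⟩ := Submodule.mem_sup.mp hx'
      refine Submodule.mem_sup.mpr ⟨⟨t, Ideal.pow_le_pow_right (Nat.le_succ k) ht⟩, ht,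
        ⟨s, hSkle hs⟩, hs, ?_⟩
      refine Subtype.ext ?_
      show t + s = x
      rw [add_comm]
      exact hst
  have e : gradedPiece F p k ≃ₗ[F] ↥(⨆ i ∈ Finset.range (k + 1), X i) :=
    (Submodule.quotientEquivOfIsCompl _ _ hcompl).trans
      (Submodule.comapSubtypeEquivOfLe hSkle)
  obtain ⟨hfinSk, hrankSk⟩ := finrank_biSup_of_projections X hXfin π hid hzero
    (Finset.range (k + 1))
  constructor
  · exact e.symm.finiteDimensional
  · rw [LinearEquiv.finrank_eq e, hrankSk]
    exact Finset.sum_congr rfl fun i _ => hXrank i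
end

section
/- Let b : {1,…,n} → ℕ be a weakly increasing function (so its fibers, the 'blocks', are consecutive intervals), and let x be a permutation of {1,…,n} such that x(i) > x(j) whenever i < j and b(i) = b(j) (x is maximal in its left W_P-coset for the parabolic P determined by b). Then for all indices i > j one has x⁻¹(i) > x⁻¹(j) if and only if b(x⁻¹(i)) > b(x⁻¹(j)); that is, {(i,j) : i > j, x⁻¹(i) > x⁻¹(j)} = {(i,j) : i > j, b(x⁻¹(i)) > b(x⁻¹(j))}. -/
/-- **Lemma 4.3 (2) (type A).** Let `b : {0,…,n-1} → ℕ` be weakly increasing, encoding a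
standard parabolic `P` whose Levi blocks are the fibers of `b`, and let `x` be a
permutation that is maximal in its left `W_P`-coset (i.e. `x(i) > x(j)` whenever `i < j`
and `b(i) = b(j)`). Then for all `i > j`: `x⁻¹(i) > x⁻¹(j)` iff `b(x⁻¹(i)) > b(x⁻¹(j))`;
that is, the roots of `U⁻(x) ∩ U⁻` are exactly those of `U_P⁻(x) ∩ U⁻`. -/
theorem umaxmin_max {n : ℕ} (b : Fin n → ℕ) (hb : Monotone b) (x : Equiv.Perm (Fin n))
    (hx : ∀ i j : Fin n, i < j → b i = b j → x j < x i) :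
    ∀ i j : Fin n, j < i → (x⁻¹ j < x⁻¹ i ↔ b (x⁻¹ j) < b (x⁻¹ i)) := by
  intro i j hji
  constructor
  · intro hq
    rcases lt_or_eq_of_le (hb hq.le) with h | h
    · exact h
    · exact absurd (hx _ _ hq h) (by simpa using hji.not_gt)
  · intro hb'
    by_contra h
    exact absurd (hb (not_lt.mp h)) hb'.not_ge
end
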